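/- Let B be the disjoint union of k balanced complete bipartite graphs of orders n₁, …, n_k with n₁ + ⋯ + n_k = n. Then F(B) ≥ l^k · 2^{n − (k/2)·log₂(n/k)}, where l is a positive constant such that C(x,⌊x/2⌋) ≥ l·2^x/√x for all positive integers x. -/

import Mathlib

def GDiff {V : Type*} (G : SimpleGraph V) (π σ : Equiv.Perm V) : Prop :=
  ∃ i, G.Adj (π i) (σ i)

noncomputable def famF {V : Type*} (G : SimpleGraph V) : ℕ :=
  sSup {k | ∃ S : Finset (Equiv.Perm V), S.card = k ∧
    (S : Set (Equiv.Perm V)).Pairwise (GDiff G)}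

/-- The disjoint union of `k` balanced complete bipartite graphs, the `i`-th of
order `ns i` (its parts being its first `⌊ns i / 2⌋` vertices and the rest). -/
def Bgraph (k : ℕ) (ns : Fin k → ℕ) : SimpleGraph (Σ i : Fin k, Fin (ns i)) where
  Adj x y := x.1 = y.1 ∧
    (((x.2 : ℕ) < ns x.1 / 2 ∧ ¬ (y.2 : ℕ) < ns y.1 / 2) ∨
      ((y.2 : ℕ) < ns y.1 / 2 ∧ ¬ (x.2 : ℕ) < ns x.1 / 2))
  symm := ⟨fun x y h => ⟨h.1.symm, Or.symm h.2⟩⟩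
  loopless := ⟨fun x h => by rcases h.2 with ⟨h1, h2⟩ | ⟨h1, h2⟩ <;> exact h2 h1⟩



noncomputable def permA {m : ℕ} (A : Finset (Fin m)) : Equiv.Perm (Fin m) :=
  (Equiv.sumCompl (· ∈ A)).symm.trans
    ((Equiv.sumCongr (A.orderIsoOfFin rfl).toEquiv.symm
      ((Equiv.subtypeEquivRight (p := fun x => ¬ x ∈ A) (q := fun x => x ∈ Aᶜ)
        (fun x => (Finset.mem_compl (s := A)).symm)).trans
        (Aᶜ.orderIsoOfFin rfl).toEquiv.symm)).trans
      (finSumFinEquiv.trans (finCongr (by simpa using Finset.card_add_card_compl A))))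

theorem permA_lt {m : ℕ} (A : Finset (Fin m)) (i : Fin m) :
    ((permA A i : ℕ) < A.card) ↔ i ∈ A := by
  by_cases h : i ∈ A
  · simp only [permA, Equiv.trans_apply, Equiv.sumCompl_symm_apply_of_pos (p := (· ∈ A)) h,
      Equiv.sumCongr_apply, Sum.map_inl, finSumFinEquiv_apply_left, finCongr_apply,
      Fin.coe_cast, Fin.coe_castAdd]
    simp [h]
  · simp only [permA, Equiv.trans_apply, Equiv.sumCompl_symm_apply_of_neg (p := (· ∈ A)) h,
      Equiv.sumCongr_apply, Sum.map_inr, finSumFinEquiv_apply_right, finCongr_apply,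
      Fin.coe_cast, Fin.coe_natAdd]
    simp [h]

variable {k : ℕ} {ns : Fin k → ℕ}

noncomputable def Phi (ns : Fin k → ℕ)
    (f : ∀ i, {A : Finset (Fin (ns i)) // A.card = ns i / 2}) :
    Equiv.Perm (Σ i : Fin k, Fin (ns i)) :=
  Equiv.sigmaCongrRight fun i => permA (f i).1

theorem Phi_apply (f : ∀ i, {A : Finset (Fin (ns i)) // A.card = ns i / 2})
    (i : Fin k) (j : Fin (ns i)) : Phi ns f ⟨i, j⟩ = ⟨i, permA (f i).1 j⟩ := rfl

theorem Phi_inj : Function.Injective (Phi ns) := by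
  intro f g h
  funext i
  apply Subtype.ext
  ext j
  rw [← permA_lt, ← permA_lt]
  have h2 : permA (f i).1 j = permA (g i).1 j := by
    have := congrFun (congrArg (fun e => (e : _ → _)) (congrArg Equiv.toFun h)) ⟨i, j⟩
    simpa [Phi_apply] using this
  rw [(f i).2, (g i).2, h2]

theorem prod_choose_le_famF (k : ℕ) (ns : Fin k → ℕ) :
    (∏ i, (ns i).choose (ns i / 2)) ≤ famF (Bgraph k ns) := by
  classical
  set S : Finset (Equiv.Perm (Σ i : Fin k, Fin (ns i))) :=
    Finset.univ.image (Phi ns) with hS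
  have hcard : S.card = ∏ i, (ns i).choose (ns i / 2) := by
    rw [hS, Finset.card_image_of_injective _ Phi_inj, Finset.card_univ, Fintype.card_pi]
    congr 1
    funext i
    simpa using Fintype.card_finset_len (α := Fin (ns i)) (ns i / 2)
  have hpair : (S : Set (Equiv.Perm (Σ i : Fin k, Fin (ns i)))).Pairwise
      (GDiff (Bgraph k ns)) := by
    intro π hπ σ hσ hne
    rw [hS, Finset.coe_image] at hπ hσ
    obtain ⟨f, -, rfl⟩ := hπ
    obtain ⟨g, -, rfl⟩ := hσ
    have hfg : f ≠ g := fun h => hne (by rw [h])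
    obtain ⟨i, hi⟩ := Function.ne_iff.mp hfg
    have hAB : (f i).1 ≠ (g i).1 := fun h => hi (Subtype.ext h)
    have : ∃ j, ¬ (j ∈ (f i).1 ↔ j ∈ (g i).1) := by
      by_contra hc
      push_neg at hc
      exact hAB (Finset.ext fun j => hc j)
    obtain ⟨j, hj⟩ := this
    refine ⟨⟨i, j⟩, ?_⟩
    rw [Phi_apply, Phi_apply]
    refine (show _ ∧ _ from ⟨rfl, ?_⟩)
    have h1 : ((permA (f i).1 j : ℕ) < ns i / 2) ↔ j ∈ (f i).1 := by
      have := permA_lt (f i).1 j; rwa [(f i).2] at this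
    have h2 : ((permA (g i).1 j : ℕ) < ns i / 2) ↔ j ∈ (g i).1 := by
      have := permA_lt (g i).1 j; rwa [(g i).2] at this
    rw [iff_iff_implies_and_implies, not_and_or, Classical.not_imp, Classical.not_imp] at hj
    rcases hj with ⟨ha, hb⟩ | ⟨hb, ha⟩
    · exact Or.inl ⟨h1.mpr ha, fun h => hb (h2.mp h)⟩
    · exact Or.inr ⟨h2.mpr hb, fun h => ha (h1.mp h)⟩
  have hbdd : BddAbove {m | ∃ T : Finset (Equiv.Perm (Σ i : Fin k, Fin (ns i))),
      T.card = m ∧ (T : Set (Equiv.Perm (Σ i : Fin k, Fin (ns i)))).Pairwise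
        (GDiff (Bgraph k ns))} := by
    refine ⟨Fintype.card (Equiv.Perm (Σ i : Fin k, Fin (ns i))), ?_⟩
    rintro m ⟨T, rfl, -⟩
    exact T.card_le_univ
  calc (∏ i, (ns i).choose (ns i / 2)) = S.card := hcard.symm
    _ ≤ famF (Bgraph k ns) := le_csSup hbdd ⟨S, rfl, hpair⟩

theorem analytic (k n : ℕ) (hk : 0 < k) (ns : Fin k → ℕ) (hns : ∀ i, 0 < ns i)
    (hsum : ∑ i, ns i = n)
    (l : ℝ) (hl : 0 < l)
    (hlb : ∀ x : ℕ, 0 < x → l * 2 ^ x / Real.sqrt x ≤ (x.choose (x / 2) : ℝ)) :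
    l ^ k * (2 : ℝ) ^ ((n : ℝ) - ((k : ℝ) / 2) * Real.logb 2 ((n : ℝ) / (k : ℝ))) ≤
      ∏ i, ((ns i).choose (ns i / 2) : ℝ) := by
  classical
  have hkR : (0:ℝ) < k := by exact_mod_cast hk
  have hnk : k ≤ n := by
    calc k = ∑ _i : Fin k, 1 := by simp
    _ ≤ ∑ i, ns i := Finset.sum_le_sum fun i _ => hns i
    _ = n := hsum
  have hn : 0 < n := lt_of_lt_of_le hk hnk
  have hnR : (0:ℝ) < n := by exact_mod_cast hn
  have hq : (0:ℝ) < (n:ℝ)/(k:ℝ) := div_pos hnR hkR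
  set G : ℝ := ∏ i, ((ns i : ℝ)) with hG
  have hGpos : 0 < G := Finset.prod_pos fun i _ => by exact_mod_cast hns i
  have hgm : G ^ ((k:ℝ)⁻¹) ≤ (n:ℝ)/(k:ℝ) := by
    have h0 := Real.geom_mean_le_arith_mean_weighted Finset.univ (fun _ => (k:ℝ)⁻¹)
      (fun i => (ns i : ℝ)) (fun i _ => by positivity)
      (by simp only [Finset.sum_const, Finset.card_univ, Fintype.card_fin, nsmul_eq_mul]; field_simp) (fun i _ => by positivity)
    calc G ^ ((k:ℝ)⁻¹) = ∏ i, ((ns i:ℝ)) ^ ((k:ℝ)⁻¹) :=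
          (Real.finset_prod_rpow _ _ (fun i _ => by positivity) _).symm
    _ ≤ ∑ i, (k:ℝ)⁻¹ * (ns i : ℝ) := h0
    _ = (n:ℝ)/(k:ℝ) := by
        rw [← Finset.mul_sum]
        have : (∑ i, ((ns i : ℝ))) = (n:ℝ) := by exact_mod_cast hsum
        rw [this, inv_mul_eq_div]
  have hGle : G ≤ ((n:ℝ)/(k:ℝ)) ^ (k:ℝ) := by
    have h1 : G = (G ^ ((k:ℝ)⁻¹)) ^ (k:ℝ) := by
      rw [← Real.rpow_mul hGpos.le, inv_mul_cancel₀ (ne_of_gt hkR), Real.rpow_one]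
    rw [h1]
    exact Real.rpow_le_rpow (Real.rpow_nonneg hGpos.le _) hgm hkR.le
  have hsqrt : Real.sqrt G ≤ ((n:ℝ)/(k:ℝ)) ^ ((k:ℝ)/2) := by
    rw [Real.sqrt_eq_rpow]
    calc G ^ (1/2:ℝ) ≤ (((n:ℝ)/(k:ℝ)) ^ (k:ℝ)) ^ (1/2:ℝ) :=
          Real.rpow_le_rpow hGpos.le hGle (by norm_num)
    _ = ((n:ℝ)/(k:ℝ)) ^ ((k:ℝ)/2) := by
        rw [← Real.rpow_mul hq.le]; ring_nf
  have hprod : l ^ k * 2 ^ (n:ℝ) / Real.sqrt G ≤ ∏ i, ((ns i).choose (ns i / 2) : ℝ) := by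
    have heq : l ^ k * 2 ^ (n:ℝ) / Real.sqrt G
        = ∏ i, (l * 2 ^ (ns i) / Real.sqrt (ns i)) := by
      rw [Finset.prod_div_distrib, Finset.prod_mul_distrib, Finset.prod_const,
        Finset.card_univ, Fintype.card_fin]
      congr 1
      · congr 1
        rw [Finset.prod_pow_eq_pow_sum, hsum, ← Real.rpow_natCast]
      · rw [hG]
        simp only [Real.sqrt_eq_rpow]
        rw [Real.finset_prod_rpow _ _ (fun i _ => by positivity)]
    rw [heq]
    exact Finset.prod_le_prod (fun i _ => by positivity) (fun i _ => hlb _ (hns i))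
  have hrhs : l ^ k * (2:ℝ) ^ ((n:ℝ) - ((k:ℝ)/2) * Real.logb 2 ((n:ℝ)/(k:ℝ)))
      ≤ l ^ k * 2 ^ (n:ℝ) / Real.sqrt G := by
    rw [Real.rpow_sub two_pos, mul_comm ((k:ℝ)/2), Real.rpow_mul (by norm_num : (0:ℝ) ≤ 2),
      Real.rpow_logb two_pos (by norm_num) hq, ← mul_div_assoc]
    have hs0 : 0 < Real.sqrt G := Real.sqrt_pos.mpr hGpos
    exact div_le_div_of_nonneg_left (by positivity) hs0 hsqrt
  linarith

theorem stmt10 (k n : ℕ) (hk : 0 < k) (ns : Fin k → ℕ) (hns : ∀ i, 0 < ns i)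
    (hsum : ∑ i, ns i = n)
    (l : ℝ) (hl : 0 < l)
    (hlb : ∀ x : ℕ, 0 < x → l * 2 ^ x / Real.sqrt x ≤ (x.choose (x / 2) : ℝ)) :
    l ^ k * (2 : ℝ) ^ ((n : ℝ) - ((k : ℝ) / 2) * Real.logb 2 ((n : ℝ) / (k : ℝ))) ≤
      (famF (Bgraph k ns) : ℝ) := by
  have h1 := analytic k n hk ns hns hsum l hl hlb
  have h2 : (∏ i, ((ns i).choose (ns i / 2) : ℝ)) ≤ (famF (Bgraph k ns) : ℝ) := by
    exact_mod_cast Nat.cast_le.mpr (prod_choose_le_famF k ns)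
  linarith
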